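/- Let ℓ ≥ 2 be an integer and ρ ≥ 1 a real number. Let OPT_1, …, OPT_ℓ and TOP_1, …, TOP_ℓ be nonnegative real numbers such that TOP_i ≤ ρ·(OPT_i + OPT_{i+1} + … + OPT_ℓ) for every 1 ≤ i ≤ ℓ. Then Σ_{i=1}^ℓ i·TOP_i ≤ ((ℓ+1)/2)·ρ·Σ_{i=1}^ℓ i·OPT_i. -/
import Mathlib


lemma gauss_Icc (j : ℕ) : ∑ i ∈ Finset.Icc 1 j, (i : ℝ) = j * (j + 1) / 2 := by
  induction j with
  | zero => simp
  | succ n ih =>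
    rw [Finset.sum_Icc_succ_top (by omega), ih]
    push_cast
    ring

/-- Arithmetic core of the `(ℓ+1)/2·ρ` guarantee of the top-down approach for the
multi-level Steiner tree problem: if `TOP i ≤ ρ·(OPT i + … + OPT ℓ)` for all levels `i`,
then `Σ i·TOP i ≤ ((ℓ+1)/2)·ρ·Σ i·OPT i`. -/
theorem stmt_0 (ℓ : ℕ) (hℓ : 2 ≤ ℓ) (ρ : ℝ) (hρ : 1 ≤ ρ)
    (OPT TOP : ℕ → ℝ)
    (hOPTnn : ∀ i ∈ Finset.Icc 1 ℓ, 0 ≤ OPT i)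
    (hTOPnn : ∀ i ∈ Finset.Icc 1 ℓ, 0 ≤ TOP i)
    (hle : ∀ i ∈ Finset.Icc 1 ℓ, TOP i ≤ ρ * ∑ j ∈ Finset.Icc i ℓ, OPT j) :
    ∑ i ∈ Finset.Icc 1 ℓ, (i : ℝ) * TOP i ≤
      (((ℓ : ℝ) + 1) / 2) * ρ * ∑ i ∈ Finset.Icc 1 ℓ, (i : ℝ) * OPT i := by
  have hρ0 : (0:ℝ) ≤ ρ := le_trans zero_le_one hρ
  calc ∑ i ∈ Finset.Icc 1 ℓ, (i : ℝ) * TOP i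
      ≤ ∑ i ∈ Finset.Icc 1 ℓ, (i : ℝ) * (ρ * ∑ j ∈ Finset.Icc i ℓ, OPT j) := by
        apply Finset.sum_le_sum
        intro i hi
        exact mul_le_mul_of_nonneg_left (hle i hi)
          (by exact_mod_cast Nat.zero_le i)
    _ = ρ * ∑ i ∈ Finset.Icc 1 ℓ, ∑ j ∈ Finset.Icc i ℓ, (i : ℝ) * OPT j := by
        simp only [Finset.mul_sum]
        exact Finset.sum_congr rfl fun i _ => Finset.sum_congr rfl fun j _ => by ring
    _ = ρ * ∑ j ∈ Finset.Icc 1 ℓ, ∑ i ∈ Finset.Icc 1 j, (i : ℝ) * OPT j := by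
        congr 1
        apply Finset.sum_comm'
        intro i j
        simp only [Finset.mem_Icc]
        omega
    _ = ρ * ∑ j ∈ Finset.Icc 1 ℓ, ((j : ℝ) * (j + 1) / 2) * OPT j := by
        congr 1
        apply Finset.sum_congr rfl
        intro j _
        rw [← Finset.sum_mul, gauss_Icc]
    _ ≤ ρ * ∑ j ∈ Finset.Icc 1 ℓ, ((ℓ : ℝ) + 1) / 2 * ((j : ℝ) * OPT j) := by
        apply mul_le_mul_of_nonneg_left _ hρ0
        apply Finset.sum_le_sum
        intro j hj
        have hj' : (j : ℝ) ≤ ℓ := by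
          exact_mod_cast (Finset.mem_Icc.mp hj).2
        have hjnn : (0:ℝ) ≤ j := Nat.cast_nonneg j
        have := hOPTnn j hj
        nlinarith [mul_nonneg (mul_nonneg (sub_nonneg.mpr hj') hjnn) this]
    _ = (((ℓ : ℝ) + 1) / 2) * ρ * ∑ i ∈ Finset.Icc 1 ℓ, (i : ℝ) * OPT i := by
        rw [← Finset.mul_sum]
        ring
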